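/- For the Kodaira surface parameters with t₁₄ = 0, t₃₂ = 0, |t₁₁| < 1, |t₂₂| < 1, the deformed subspace L_ε = span{T̄ + t₁₁T, W̄ + t₂₂W, ω - t₁₁ω̄, ρ - t₂₂ρ̄} equals E ⊕ Ann(E) for E = span{T̄ + t₁₁T, W̄ + t₂₂W}, E ∩ Ē = 0, and E is closed under the Lie bracket of g ⊗ ℂ; hence L_ε defines a classical complex structure (the Borcea deformations). -/

import Mathlib

open Complex

/-! For `t₁₄ = 0`, `t₃₂ = 0`, `|t₁₁| < 1`, `|t₂₂| < 1`, the deformation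
`L_ε = span{T̄ + t₁₁T, W̄ + t₂₂W, ω - t₁₁ω̄, ρ - t₂₂ρ̄}` is of classical complex type
(the Borcea deformations): `L_ε = E ⊕ Ann(E)` for `E = span{T̄ + t₁₁T, W̄ + t₂₂W}`,
`E ∩ Ē = 0`, and `E` is a Lie subalgebra of `g ⊗ ℂ`.  Coordinates: first component in
the basis `(T, W, T̄, W̄)` of `g ⊗ ℂ` (only nonzero bracket `[T, T̄] = (i/2)(W + W̄)`),
second in the dual basis `(ω, ρ, ω̄, ρ̄)`. -/

abbrev V8 := (Fin 4 → ℂ) × (Fin 4 → ℂ)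

noncomputable def gbr (A B : Fin 4 → ℂ) : Fin 4 → ℂ :=
  fun i => if i = 1 ∨ i = 3 then (I/2) * (A 0 * B 2 - A 2 * B 0) else 0

noncomputable def evalLM (v : Fin 4 → ℂ) : (Fin 4 → ℂ) →ₗ[ℂ] ℂ :=
  ∑ i, v i • LinearMap.proj i

noncomputable def annE (E : Submodule ℂ (Fin 4 → ℂ)) : Submodule ℂ (Fin 4 → ℂ) :=
  ⨅ v ∈ E, LinearMap.ker (evalLM v)

/-- The subspace `E ⊕ Ann(E) ⊆ (g ⊕ g*) ⊗ ℂ`. -/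
noncomputable def prodAnn (E : Submodule ℂ (Fin 4 → ℂ)) : Submodule ℂ V8 :=
  E.comap (LinearMap.fst ℂ (Fin 4 → ℂ) (Fin 4 → ℂ)) ⊓
    (annE E).comap (LinearMap.snd ℂ (Fin 4 → ℂ) (Fin 4 → ℂ))

/-- `L_ε` for parameters `(0, t₁₁, t₂₂, 0)`. -/
noncomputable def Leps0 (t11 t22 : ℂ) : Submodule ℂ V8 :=
  Submodule.span ℂ
    {(![t11, 0, 1, 0], 0), (![0, t22, 0, 1], 0),
     (0, ![1, 0, -t11, 0]), (0, ![0, 1, 0, -t22])}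

/-- `E = span{T̄ + t₁₁T, W̄ + t₂₂W}`. -/
noncomputable def Esub (t11 t22 : ℂ) : Submodule ℂ (Fin 4 → ℂ) :=
  Submodule.span ℂ {![t11, 0, 1, 0], ![0, t22, 0, 1]}

/-- `Ē = span{T + t̄₁₁T̄, W + t̄₂₂W̄}`, the conjugate of `E`. -/
noncomputable def Ebar (t11 t22 : ℂ) : Submodule ℂ (Fin 4 → ℂ) :=
  Submodule.span ℂ {![1, 0, starRingEnd ℂ t11, 0], ![0, 1, 0, starRingEnd ℂ t22]}


lemma evalLM_apply (v w : Fin 4 → ℂ) :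
    evalLM v w = v 0 * w 0 + v 1 * w 1 + v 2 * w 2 + v 3 * w 3 := by
  simp [evalLM, Fin.sum_univ_four]

lemma mem_Esub (t11 t22 : ℂ) (v : Fin 4 → ℂ) :
    v ∈ Esub t11 t22 ↔ v 0 = t11 * v 2 ∧ v 1 = t22 * v 3 := by
  rw [Esub, Submodule.mem_span_pair]
  constructor
  · rintro ⟨a, b, rfl⟩
    constructor <;> simp <;> ring
  · rintro ⟨h0, h1⟩
    refine ⟨v 2, v 3, ?_⟩
    funext i
    fin_cases i <;> simp [h0, h1] <;> ring

lemma mem_Ebar (t11 t22 : ℂ) (v : Fin 4 → ℂ) :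
    v ∈ Ebar t11 t22 ↔
      v 2 = starRingEnd ℂ t11 * v 0 ∧ v 3 = starRingEnd ℂ t22 * v 1 := by
  rw [Ebar, Submodule.mem_span_pair]
  constructor
  · rintro ⟨a, b, rfl⟩
    constructor <;> simp <;> ring
  · rintro ⟨h0, h1⟩
    refine ⟨v 0, v 1, ?_⟩
    funext i
    fin_cases i <;> simp [h0, h1] <;> ring

lemma mem_annE (t11 t22 : ℂ) (w : Fin 4 → ℂ) :
    w ∈ annE (Esub t11 t22) ↔ t11 * w 0 + w 2 = 0 ∧ t22 * w 1 + w 3 = 0 := by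
  simp only [annE, Submodule.mem_iInf, LinearMap.mem_ker]
  constructor
  · intro h
    have hg1 : (![t11, 0, 1, 0] : Fin 4 → ℂ) ∈ Esub t11 t22 :=
      Submodule.subset_span (Set.mem_insert _ _)
    have hg2 : (![0, t22, 0, 1] : Fin 4 → ℂ) ∈ Esub t11 t22 :=
      Submodule.subset_span (Set.mem_insert_of_mem _ rfl)
    have h1 := h _ hg1
    have h2 := h _ hg2
    rw [evalLM_apply] at h1 h2
    simp only [Matrix.cons_val_zero, Matrix.cons_val_one, Matrix.head_cons,
      Matrix.cons_val_two, Matrix.cons_val_three, Matrix.tail_cons] at h1 h2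
    constructor
    · linear_combination h1
    · linear_combination h2
  · rintro ⟨h1, h2⟩ v hv
    obtain ⟨e0, e1⟩ := (mem_Esub t11 t22 v).mp hv
    rw [evalLM_apply, e0, e1]
    linear_combination v 2 * h1 + v 3 * h2

/-- `L_ε = E ⊕ Ann(E)`, `E ∩ Ē = 0`, and `E` is closed under the Lie bracket:
`L_ε` defines a classical complex structure (the Borcea deformations). -/
theorem borcea_classical_complex_structure (t11 t22 : ℂ)
    (h11 : ‖t11‖ < 1) (h22 : ‖t22‖ < 1) :
    Leps0 t11 t22 = prodAnn (Esub t11 t22) ∧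
    Esub t11 t22 ⊓ Ebar t11 t22 = ⊥ ∧
    (∀ v ∈ Esub t11 t22, ∀ w ∈ Esub t11 t22, gbr v w ∈ Esub t11 t22) := by
  have c1 : t11 * starRingEnd ℂ t11 ≠ 1 := by
    rw [Complex.mul_conj]
    have hn : Complex.normSq t11 < 1 := by
      rw [← Complex.sq_norm]; nlinarith [norm_nonneg t11]
    intro h
    exact hn.ne (by exact_mod_cast h)
  have c2 : t22 * starRingEnd ℂ t22 ≠ 1 := by
    rw [Complex.mul_conj]
    have hn : Complex.normSq t22 < 1 := by
      rw [← Complex.sq_norm]; nlinarith [norm_nonneg t22]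
    intro h
    exact hn.ne (by exact_mod_cast h)
  refine ⟨?_, ?_, ?_⟩
  · apply le_antisymm
    · rw [Leps0, Submodule.span_le]
      rintro x (rfl | rfl | rfl | rfl) <;>
        refine Submodule.mem_inf.mpr ⟨?_, ?_⟩ <;>
        simp only [Submodule.mem_comap, LinearMap.fst_apply, LinearMap.snd_apply]
      · exact Submodule.subset_span (Set.mem_insert _ _)
      · exact (annE _).zero_mem
      · exact Submodule.subset_span (Set.mem_insert_of_mem _ rfl)
      · exact (annE _).zero_mem
      · exact (Esub t11 t22).zero_mem
      · rw [mem_annE]; constructor <;> simp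
      · exact (Esub t11 t22).zero_mem
      · rw [mem_annE]; constructor <;> simp
    · rintro ⟨x, y⟩ h
      rw [prodAnn, Submodule.mem_inf] at h
      obtain ⟨hx, hy⟩ := h
      simp only [Submodule.mem_comap, LinearMap.fst_apply, LinearMap.snd_apply] at hx hy
      obtain ⟨e0, e1⟩ := (mem_Esub t11 t22 x).mp hx
      obtain ⟨a1, a2⟩ := (mem_annE t11 t22 y).mp hy
      have hxy : ((x, y) : V8) =
          x 2 • ((![t11, 0, 1, 0] : Fin 4 → ℂ), (0 : Fin 4 → ℂ)) +
          x 3 • ((![0, t22, 0, 1] : Fin 4 → ℂ), (0 : Fin 4 → ℂ)) +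
          y 0 • ((0 : Fin 4 → ℂ), (![1, 0, -t11, 0] : Fin 4 → ℂ)) +
          y 1 • ((0 : Fin 4 → ℂ), (![0, 1, 0, -t22] : Fin 4 → ℂ)) := by
        have ha1 : y 2 = -(t11 * y 0) := by linear_combination a1
        have ha2 : y 3 = -(t22 * y 1) := by linear_combination a2
        refine Prod.ext ?_ ?_ <;> funext i <;> fin_cases i <;>
          simp [e0, e1, ha1, ha2] <;> ring
      rw [hxy, Leps0]
      have m1 : ((![t11, 0, 1, 0] : Fin 4 → ℂ), (0 : Fin 4 → ℂ)) ∈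
          ({((![t11, 0, 1, 0] : Fin 4 → ℂ), (0 : Fin 4 → ℂ)),
            (![0, t22, 0, 1], 0), (0, ![1, 0, -t11, 0]), (0, ![0, 1, 0, -t22])} :
            Set V8) := Set.mem_insert _ _
      have m2 : ((![0, t22, 0, 1] : Fin 4 → ℂ), (0 : Fin 4 → ℂ)) ∈
          ({((![t11, 0, 1, 0] : Fin 4 → ℂ), (0 : Fin 4 → ℂ)),
            (![0, t22, 0, 1], 0), (0, ![1, 0, -t11, 0]), (0, ![0, 1, 0, -t22])} :
            Set V8) := Set.mem_insert_of_mem _ (Set.mem_insert _ _)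
      have m3 : ((0 : Fin 4 → ℂ), (![1, 0, -t11, 0] : Fin 4 → ℂ)) ∈
          ({((![t11, 0, 1, 0] : Fin 4 → ℂ), (0 : Fin 4 → ℂ)),
            (![0, t22, 0, 1], 0), (0, ![1, 0, -t11, 0]), (0, ![0, 1, 0, -t22])} :
            Set V8) := Set.mem_insert_of_mem _ (Set.mem_insert_of_mem _ (Set.mem_insert _ _))
      have m4 : ((0 : Fin 4 → ℂ), (![0, 1, 0, -t22] : Fin 4 → ℂ)) ∈
          ({((![t11, 0, 1, 0] : Fin 4 → ℂ), (0 : Fin 4 → ℂ)),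
            (![0, t22, 0, 1], 0), (0, ![1, 0, -t11, 0]), (0, ![0, 1, 0, -t22])} :
            Set V8) := Set.mem_insert_of_mem _ (Set.mem_insert_of_mem _
              (Set.mem_insert_of_mem _ rfl))
      exact Submodule.add_mem _ (Submodule.add_mem _ (Submodule.add_mem _
        (Submodule.smul_mem _ _ (Submodule.subset_span m1))
        (Submodule.smul_mem _ _ (Submodule.subset_span m2)))
        (Submodule.smul_mem _ _ (Submodule.subset_span m3)))
        (Submodule.smul_mem _ _ (Submodule.subset_span m4))
  · rw [eq_bot_iff]
    rintro v hv
    rw [Submodule.mem_inf] at hv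
    obtain ⟨hE, hB⟩ := hv
    obtain ⟨e0, e1⟩ := (mem_Esub t11 t22 v).mp hE
    obtain ⟨b2, b3⟩ := (mem_Ebar t11 t22 v).mp hB
    have hv0 : v 0 = 0 := by
      have : v 0 * (1 - t11 * starRingEnd ℂ t11) = 0 := by
        rw [b2] at e0; linear_combination e0
      rcases mul_eq_zero.mp this with h | h
      · exact h
      · exact absurd (by linear_combination -h) c1
    have hv1 : v 1 = 0 := by
      have : v 1 * (1 - t22 * starRingEnd ℂ t22) = 0 := by
        rw [b3] at e1; linear_combination e1
      rcases mul_eq_zero.mp this with h | h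
      · exact h
      · exact absurd (by linear_combination -h) c2
    have hv2 : v 2 = 0 := by rw [b2, hv0, mul_zero]
    have hv3 : v 3 = 0 := by rw [b3, hv1, mul_zero]
    simp only [Submodule.mem_bot]
    funext i
    fin_cases i <;> simpa using by assumption
  · intro v hv w hw
    obtain ⟨e0, _⟩ := (mem_Esub t11 t22 v).mp hv
    obtain ⟨f0, _⟩ := (mem_Esub t11 t22 w).mp hw
    have : gbr v w = 0 := by
      funext i
      simp only [gbr, Pi.zero_apply]
      split
      · rw [e0, f0]; ring
      · rfl
    rw [this]
    exact (Esub t11 t22).zero_mem
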